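/- Let T be the M×M lower-triangular Toeplitz matrix with entries T_{ij} = t_{i-j} for i ≥ j (and 0 otherwise), where t₀, t₁, ..., t_{M-1} are real numbers. Define p₀ = e^{t₀} and p_i = Σ_{l=0}^{i-1} ((i-l)/i) p_l t_{i-l} for 1 ≤ i ≤ M-1. Then Σ_{i=0}^{M-1} p_i equals the induced ℓ₁ norm of the matrix exponential e^T when all t_k ≥ 0 for k ≥ 1, i.e., Σ_{i=0}^{M-1} p_i = Σ_{i=0}^{M-1} (e^T)_{i,0}, which is the column sum of the first column of e^T. -/

import Mathlib

open MeasureTheory Real NormedSpace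
open scoped Matrix
open Finset

/-- `ccT t n k` = entry of the `n`-th power of the lower-triangular Toeplitz matrix. -/
noncomputable def ccT (t : ℕ → ℝ) : ℕ → ℕ → ℝ
  | 0, k => if k = 0 then 1 else 0
  | n+1, k => ∑ m ∈ Finset.range (k+1), t m * ccT t n (k - m)

lemma ccT_zero_right (t : ℕ → ℝ) : ∀ n, ccT t n 0 = t 0 ^ n := by
  intro n
  induction n with
  | zero => simp [ccT]
  | succ n ih => simp [ccT, ih]; ring

lemma ccT_one (t : ℕ → ℝ) (k : ℕ) : ccT t 1 k = t k := by
  show (∑ m ∈ Finset.range (k+1), t m * ccT t 0 (k - m)) = t k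
  rw [Finset.sum_eq_single_of_mem k (Finset.self_mem_range_succ k)]
  · simp [ccT]
  · intro m hm hmk
    have : k - m ≠ 0 := by
      simp only [Finset.mem_range] at hm; omega
    simp [ccT, this]

lemma tri_square (k : ℕ) (F : ℕ → ℕ → ℝ) :
    ∑ m ∈ range (k+1), ∑ r ∈ range (k - m + 1), F m r
      = ∑ m ∈ range (k+1), ∑ r ∈ range (k+1), if m + r ≤ k then F m r else 0 := by
  refine Finset.sum_congr rfl fun m hm => ?_
  have hmk : m ≤ k := by simpa [Nat.lt_succ_iff] using hm
  rw [show (∑ r ∈ range (k - m + 1), F m r)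
      = ∑ r ∈ range (k - m + 1), if m + r ≤ k then F m r else 0 from
    Finset.sum_congr rfl fun r hr => by
      have : r ≤ k - m := by simpa [Nat.lt_succ_iff] using hr
      rw [if_pos (by omega)]]
  refine Finset.sum_subset ?_ ?_
  · intro r hr; simp only [Finset.mem_range] at *; omega
  · intro r hr hr'; simp only [Finset.mem_range] at *
    rw [if_neg (by omega)]

lemma tri_symm (k : ℕ) (F : ℕ → ℕ → ℝ) :
    ∑ m ∈ range (k+1), ∑ r ∈ range (k - m + 1), F m r
      = ∑ m ∈ range (k+1), ∑ r ∈ range (k - m + 1), F r m := by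
  rw [tri_square k F, tri_square k (fun m r => F r m), Finset.sum_comm]
  refine Finset.sum_congr rfl fun m _ => Finset.sum_congr rfl fun r _ => ?_
  rw [add_comm r m]

lemma ccT_key (t : ℕ → ℝ) : ∀ (n k : ℕ), (k : ℝ) * ccT t (n+1) k
    = ((n : ℝ) + 1) * ∑ m ∈ range (k+1), (m : ℝ) * t m * ccT t n (k - m) := by
  intro n
  induction n with
  | zero =>
    intro k
    rw [ccT_one]
    rw [Finset.sum_eq_single_of_mem k (Finset.self_mem_range_succ k)]
    · simp [ccT]
    · intro m hm hmk
      have : k - m ≠ 0 := by simp only [Finset.mem_range] at hm; omega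
      simp [ccT, this]
  | succ n ih =>
    intro k
    have hunf : ccT t (n+2) k = ∑ m ∈ range (k+1), t m * ccT t (n+1) (k - m) := rfl
    rw [hunf, Finset.mul_sum]
    have hsplit : ∀ m ∈ range (k+1),
        (k : ℝ) * (t m * ccT t (n+1) (k - m))
          = (m : ℝ) * t m * ccT t (n+1) (k - m)
            + t m * (((k - m : ℕ) : ℝ) * ccT t (n+1) (k - m)) := by
      intro m hm
      have hmk : m ≤ k := by simpa [Nat.lt_succ_iff] using hm
      have : (k : ℝ) = (m : ℝ) + ((k - m : ℕ) : ℝ) := by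
        push_cast [Nat.cast_sub hmk]; ring
      rw [this]; ring
    rw [Finset.sum_congr rfl hsplit, Finset.sum_add_distrib]
    have hIH : ∀ m ∈ range (k+1),
        t m * (((k - m : ℕ) : ℝ) * ccT t (n+1) (k - m))
          = ((n : ℝ) + 1) * ∑ r ∈ range (k - m + 1),
              t m * ((r : ℝ) * t r * ccT t n (k - m - r)) := by
      intro m _
      rw [ih (k - m)]
      simp only [Finset.mul_sum]
      exact Finset.sum_congr rfl fun r _ => by ring
    rw [Finset.sum_congr rfl hIH, ← Finset.mul_sum]
    have hsym : ∑ m ∈ range (k+1), ∑ r ∈ range (k - m + 1),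
        t m * ((r : ℝ) * t r * ccT t n (k - m - r))
        = ∑ m ∈ range (k+1), (m : ℝ) * t m * ccT t (n+1) (k - m) := by
      rw [tri_symm k (fun m r => t m * ((r : ℝ) * t r * ccT t n (k - m - r)))]
      refine Finset.sum_congr rfl fun m hm => ?_
      have hunf2 : ccT t (n+1) (k - m) = ∑ r ∈ range (k - m + 1), t r * ccT t n (k - m - r) := rfl
      rw [hunf2, Finset.mul_sum]
      refine Finset.sum_congr rfl fun r hr => ?_
      have : k - r - m = k - m - r := by omega
      rw [this]; ring
    rw [hsym]; push_cast; ring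

lemma ccT_bound (t : ℕ → ℝ) (M : ℕ) :
    ∀ n k, k < M → |ccT t n k| ≤ (1 + ∑ m ∈ range M, |t m|) ^ n := by
  set B := 1 + ∑ m ∈ range M, |t m| with hB
  have hB1 : 1 ≤ B := le_add_of_nonneg_right (Finset.sum_nonneg fun _ _ => abs_nonneg _)
  intro n
  induction n with
  | zero =>
    intro k _
    by_cases h : k = 0 <;> simp [ccT, h]
  | succ n ih =>
    intro k hk
    calc |ccT t (n+1) k| = |∑ m ∈ range (k+1), t m * ccT t n (k - m)| := rfl
      _ ≤ ∑ m ∈ range (k+1), |t m * ccT t n (k - m)| := Finset.abs_sum_le_sum_abs _ _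
      _ ≤ ∑ m ∈ range (k+1), |t m| * B ^ n := by
          refine Finset.sum_le_sum fun m hm => ?_
          rw [abs_mul]
          exact mul_le_mul_of_nonneg_left (ih (k - m) (by omega)) (abs_nonneg _)
      _ = (∑ m ∈ range (k+1), |t m|) * B ^ n := by rw [Finset.sum_mul]
      _ ≤ B * B ^ n := by
          refine mul_le_mul_of_nonneg_right ?_ (by positivity)
          refine le_add_of_nonneg_of_le zero_le_one ?_
          exact Finset.sum_le_sum_of_subset_of_nonneg
            (Finset.range_subset_range.mpr (by omega)) (fun _ _ _ => abs_nonneg _)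
      _ = B ^ (n+1) := (pow_succ' B n).symm

lemma ccT_summable (t : ℕ → ℝ) (M : ℕ) (k : ℕ) (hk : k < M) :
    Summable fun n => ((n.factorial : ℝ)⁻¹) * ccT t n k := by
  set B := 1 + ∑ m ∈ range M, |t m| with hB
  refine Summable.of_norm_bounded (g := fun n => B ^ n / n.factorial)
    (Real.summable_pow_div_factorial B) fun n => ?_
  simp only [Real.norm_eq_abs, abs_mul, abs_inv, Nat.abs_cast, div_eq_inv_mul]
  exact mul_le_mul_of_nonneg_left (ccT_bound t M n k hk) (by positivity)

/-- For a lower-triangular Toeplitz matrix `T` with nonnegative subdiagonal entries,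
the quantities `p₀ = e^{t₀}`, `p_i = Σ_{l<i} ((i-l)/i) p_l t_{i-l}` sum to the induced
ℓ₁ norm of `e^T`, i.e. to the sum of the first column of the matrix exponential. -/
theorem sum_recursion_eq_column_sum_exp (M : ℕ) (hM : 0 < M)
    (t : ℕ → ℝ) (htnn : ∀ k, 1 ≤ k → 0 ≤ t k)
    (T : Matrix (Fin M) (Fin M) ℝ)
    (hT : ∀ i j : Fin M, T i j = if (j : ℕ) ≤ (i : ℕ) then t ((i : ℕ) - (j : ℕ)) else 0)
    (p : ℕ → ℝ) (hp0 : p 0 = Real.exp (t 0))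
    (hp : ∀ i : ℕ, 1 ≤ i → i ≤ M - 1 →
      p i = ∑ l ∈ Finset.range i, (((i - l : ℕ) : ℝ) / i) * p l * t (i - l)) :
    ∑ i ∈ Finset.range M, p i = ∑ i : Fin M, NormedSpace.exp T i ⟨0, hM⟩ := by
  -- entries of powers of T
  have hpow : ∀ n (i j : Fin M), (T ^ n) i j
      = if (j : ℕ) ≤ (i : ℕ) then ccT t n ((i : ℕ) - (j : ℕ)) else 0 := by
    intro n
    induction n with
    | zero =>
      intro i j
      rw [pow_zero, Matrix.one_apply]
      have : (i = j) ↔ ((i : ℕ) = (j : ℕ)) := Fin.ext_iff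
      by_cases h : (j : ℕ) ≤ (i : ℕ)
      · rw [if_pos h]
        by_cases h2 : (i : ℕ) = (j : ℕ)
        · rw [if_pos (this.mpr h2)]
          have : (i : ℕ) - (j : ℕ) = 0 := by omega
          simp [ccT, this]
        · rw [if_neg (fun hh => h2 (this.mp hh))]
          have : (i : ℕ) - (j : ℕ) ≠ 0 := by omega
          simp [ccT, this]
      · rw [if_neg h, if_neg (fun hh => h (le_of_eq (this.mp hh).symm))]
    | succ n ih =>
      intro i j
      rw [pow_succ', Matrix.mul_apply]
      have hterm : ∀ k : Fin M, T i k * (T ^ n) k j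
          = (if (k : ℕ) ≤ (i : ℕ) then t ((i : ℕ) - (k : ℕ)) else 0)
            * (if (j : ℕ) ≤ (k : ℕ) then ccT t n ((k : ℕ) - (j : ℕ)) else 0) := by
        intro k; rw [hT, ih]
      rw [Finset.sum_congr rfl fun k _ => hterm k]
      by_cases hij : (j : ℕ) ≤ (i : ℕ)
      · rw [if_pos hij]
        -- turn the Fin-sum into a ℕ-sum
        set g : ℕ → ℝ := fun u => (if u ≤ (i : ℕ) then t ((i : ℕ) - u) else 0)
            * (if (j : ℕ) ≤ u then ccT t n (u - (j : ℕ)) else 0) with hg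
        have h1' : (∑ k : Fin M,
            (if (k : ℕ) ≤ (i : ℕ) then t ((i : ℕ) - (k : ℕ)) else 0)
            * (if (j : ℕ) ≤ (k : ℕ) then ccT t n ((k : ℕ) - (j : ℕ)) else 0))
            = ∑ u ∈ range M, g u := by
          rw [Fin.sum_univ_eq_sum_range (fun u => g u) M]
        rw [h1']
        have h2 : ∑ u ∈ range M, g u = ∑ u ∈ Finset.Icc (j : ℕ) (i : ℕ), g u := by
          refine (Finset.sum_subset ?_ ?_).symm
          · intro u hu
            simp only [Finset.mem_Icc] at hu
            exact Finset.mem_range.mpr (lt_of_le_of_lt hu.2 i.isLt)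
          · intro u _ hu
            simp only [Finset.mem_Icc, not_and_or, not_le] at hu
            rcases hu with h | h
            · show (if u ≤ (i : ℕ) then t ((i : ℕ) - u) else 0)
                * (if (j : ℕ) ≤ u then ccT t n (u - (j : ℕ)) else 0) = 0
              rw [if_neg (show ¬ (j : ℕ) ≤ u by omega)]; ring
            · show (if u ≤ (i : ℕ) then t ((i : ℕ) - u) else 0)
                * (if (j : ℕ) ≤ u then ccT t n (u - (j : ℕ)) else 0) = 0
              rw [if_neg (show ¬ u ≤ (i : ℕ) by omega)]; ring
        rw [h2]
        show ∑ u ∈ Finset.Icc (j : ℕ) (i : ℕ), g u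
            = ∑ m ∈ range ((i : ℕ) - (j : ℕ) + 1), t m * ccT t n ((i : ℕ) - (j : ℕ) - m)
        refine Finset.sum_nbij' (fun u => (i : ℕ) - u) (fun m => (i : ℕ) - m) ?_ ?_ ?_ ?_ ?_
        · intro u hu; simp only [Finset.mem_Icc, Finset.mem_range] at hu ⊢; omega
        · intro m hm; simp only [Finset.mem_Icc, Finset.mem_range] at hm ⊢; omega
        · intro u hu; simp only [Finset.mem_Icc] at hu; omega
        · intro m hm; simp only [Finset.mem_range] at hm; omega
        · intro u hu; simp only [Finset.mem_Icc] at hu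
          show (if u ≤ (i : ℕ) then t ((i : ℕ) - u) else 0)
              * (if (j : ℕ) ≤ u then ccT t n (u - (j : ℕ)) else 0)
            = t ((i : ℕ) - u) * ccT t n ((i : ℕ) - (j : ℕ) - ((i : ℕ) - u))
          rw [if_pos (by omega), if_pos (by omega)]
          have e1 : (i : ℕ) - (j : ℕ) - ((i : ℕ) - u) = u - (j : ℕ) := by omega
          rw [e1]
      · rw [if_neg hij]
        refine Finset.sum_eq_zero fun k _ => ?_
        split_ifs with h1 h2 <;> first | omega | ring
  -- summability, entrywise and matrix-wise
  have hcol : ∀ i : Fin M, Summable fun n : ℕ => (((n.factorial : ℝ)⁻¹) • (T ^ n)) i := by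
    intro i
    refine Pi.summable.mpr fun j => ?_
    have he : (fun n : ℕ => (((n.factorial : ℝ)⁻¹) • (T ^ n)) i j)
        = fun n : ℕ => ((n.factorial : ℝ)⁻¹)
            * (if (j : ℕ) ≤ (i : ℕ) then ccT t n ((i : ℕ) - (j : ℕ)) else 0) := by
      funext n; rw [Matrix.smul_apply, hpow, smul_eq_mul]
    rw [he]
    by_cases h : (j : ℕ) ≤ (i : ℕ)
    · simp only [if_pos h]; exact ccT_summable t M _ (by omega)
    · simp only [if_neg h, mul_zero]; exact summable_zero
  have hS : Summable fun n : ℕ => ((n.factorial : ℝ)⁻¹) • (T ^ n) :=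
    Pi.summable.mpr hcol
  -- the first-column entries of the exponential
  set q : ℕ → ℝ := fun k => ∑' n, ((n.factorial : ℝ)⁻¹) * ccT t n k with hqdef
  have hentry : ∀ i : Fin M, NormedSpace.exp T i ⟨0, hM⟩ = q (i : ℕ) := by
    intro i
    rw [hqdef]
    simp only [exp_eq_tsum ℝ]
    erw [tsum_apply hS, tsum_apply (hcol i)]
    refine tsum_congr fun n => ?_
    rw [Matrix.smul_apply, hpow, smul_eq_mul]
    have h0 : ((⟨0, hM⟩ : Fin M) : ℕ) = 0 := rfl
    rw [h0, if_pos (Nat.zero_le _), Nat.sub_zero]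
  have hq0 : q 0 = Real.exp (t 0) := by
    rw [Real.exp_eq_exp_ℝ]
    simp only [exp_eq_tsum ℝ, hqdef]
    exact tsum_congr fun n => by rw [ccT_zero_right, smul_eq_mul]
  have hqrec : ∀ k, 1 ≤ k → k < M →
      (k : ℝ) * q k = ∑ m ∈ range (k+1), (m : ℝ) * t m * q (k - m) := by
    intro k hk1 hkM
    have hsumk := ccT_summable t M k hkM
    have h1 : (k : ℝ) * q k = ∑' n, (k : ℝ) * (((n.factorial : ℝ)⁻¹) * ccT t n k) := by
      rw [tsum_mul_left]
    rw [h1, Summable.tsum_eq_zero_add (hsumk.mul_left _)]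
    have h2 : (k : ℝ) * (((Nat.factorial 0 : ℝ)⁻¹) * ccT t 0 k) = 0 := by
      have hcc : ccT t 0 k = 0 := by
        have : k ≠ 0 := by omega
        simp [ccT, this]
      rw [hcc]; ring
    rw [h2, zero_add]
    have h3 : ∀ n : ℕ, (k : ℝ) * ((((n+1).factorial : ℝ))⁻¹ * ccT t (n+1) k)
        = ∑ m ∈ range (k+1),
            ((m : ℝ) * t m) * (((n.factorial : ℝ)⁻¹) * ccT t n (k - m)) := by
      intro n
      have hfac : (((n+1).factorial : ℝ))⁻¹ * ((n : ℝ) + 1) = ((n.factorial : ℝ))⁻¹ := by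
        rw [Nat.factorial_succ]
        have h1 : ((n : ℝ) + 1) ≠ 0 := by positivity
        have h2 : ((n.factorial : ℝ)) ≠ 0 := Nat.cast_ne_zero.mpr n.factorial_ne_zero
        push_cast
        field_simp
      calc (k : ℝ) * ((((n+1).factorial : ℝ))⁻¹ * ccT t (n+1) k)
          = (((n+1).factorial : ℝ))⁻¹ * ((k : ℝ) * ccT t (n+1) k) := by ring
        _ = (((n+1).factorial : ℝ))⁻¹ * (((n : ℝ) + 1)
              * ∑ m ∈ range (k+1), (m : ℝ) * t m * ccT t n (k - m)) := by
            rw [ccT_key]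
        _ = (((n.factorial : ℝ))⁻¹) * ∑ m ∈ range (k+1), (m : ℝ) * t m * ccT t n (k - m) := by
            rw [← mul_assoc, hfac]
        _ = ∑ m ∈ range (k+1),
              ((m : ℝ) * t m) * (((n.factorial : ℝ)⁻¹) * ccT t n (k - m)) := by
            rw [Finset.mul_sum]; exact Finset.sum_congr rfl fun m _ => by ring
    rw [tsum_congr h3,
      Summable.tsum_finsetSum (fun m _ => ((ccT_summable t M (k - m) (by omega)).mul_left _))]
    exact Finset.sum_congr rfl fun m _ => by rw [tsum_mul_left]
  have hqrec' : ∀ k, 1 ≤ k → k < M →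
      q k = ∑ l ∈ range k, (((k - l : ℕ) : ℝ) / k) * q l * t (k - l) := by
    intro k hk1 hkM
    have h := hqrec k hk1 hkM
    rw [Finset.sum_range_succ'] at h
    have h0 : ((0 : ℕ) : ℝ) * t 0 * q (k - 0) = 0 := by simp
    rw [h0, add_zero, ← Finset.sum_range_reflect] at h
    have h2 : ∀ j ∈ range k,
        (((k - 1 - j) + 1 : ℕ) : ℝ) * t ((k - 1 - j) + 1) * q (k - ((k - 1 - j) + 1))
          = ((k - j : ℕ) : ℝ) * t (k - j) * q j := by
      intro j hj; simp only [Finset.mem_range] at hj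
      have e1 : (k - 1 - j) + 1 = k - j := by omega
      have e2 : k - (k - j) = j := by omega
      rw [e1, e2]
    rw [Finset.sum_congr rfl h2] at h
    have hk0 : (k : ℝ) ≠ 0 := Nat.cast_ne_zero.mpr (by omega)
    calc q k = ((k : ℝ) * q k) / k := by field_simp
      _ = (∑ j ∈ range k, ((k - j : ℕ) : ℝ) * t (k - j) * q j) / k := by rw [h]
      _ = ∑ l ∈ range k, (((k - l : ℕ) : ℝ) / k) * q l * t (k - l) := by
          rw [Finset.sum_div]; exact Finset.sum_congr rfl fun j _ => by ring
  have hpq : ∀ i, i < M → p i = q i := by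
    intro i
    induction i using Nat.strong_induction_on with
    | _ i ih =>
      intro hiM
      rcases Nat.eq_zero_or_pos i with h0 | h1
      · rw [h0, hp0, hq0]
      · rw [hp i h1 (by omega), hqrec' i h1 hiM]
        refine Finset.sum_congr rfl fun l hl => ?_
        simp only [Finset.mem_range] at hl
        rw [ih l hl (by omega)]
  calc ∑ i ∈ Finset.range M, p i = ∑ i ∈ Finset.range M, q i :=
        Finset.sum_congr rfl fun i hi => hpq i (Finset.mem_range.mp hi)
    _ = ∑ i : Fin M, q (i : ℕ) := (Fin.sum_univ_eq_sum_range (fun u => q u) M).symm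
    _ = ∑ i : Fin M, NormedSpace.exp T i ⟨0, hM⟩ :=
        Finset.sum_congr rfl fun i _ => (hentry i).symm
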